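/- Let P : C^op → InfSL be a variational doctrine (elementary with comprehensive diagonals and full weak comprehension) on a category C with finite products. If C is elementary, has comprehensive diagonals and strong comprehensions, then C has all finite limits; concretely, for parallel arrows f, g : X → A, the comprehension arrow of P⟨f,g⟩(δ_A) is an equalizer of f and g. -/

import Mathlib

open CategoryTheory CategoryTheory.Limits Opposite

noncomputable section

universe w v u

namespace DoctrinePaper

variable {C : Type u} [Category.{v} C] [HasFiniteProducts C]

/-- The fiber of a primary doctrine `P : Cᵒᵖ ⥤ SemilatInfCat` over an object `A`. -/
abbrev Fib (P : Cᵒᵖ ⥤ SemilatInfCat.{w}) (A : C) : Type w :=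
  ↥(P.obj (op A))

/-- Reindexing along an arrow `f : A ⟶ B`. -/
def rmap (P : Cᵒᵖ ⥤ SemilatInfCat.{w}) {A B : C} (f : A ⟶ B) :
    Fib P B → Fib P A :=
  fun x => (P.map f.op) x

variable (P : Cᵒᵖ ⥤ SemilatInfCat.{w})

/-- An elementary doctrine: fibered equalities `δ A ∈ P (A ⨯ A)` such that
`E_e(α) = P⟨pr1,pr2⟩(α) ⊓ P⟨pr2,pr3⟩(δ A)` is left adjoint to reindexing along
`e = ⟨pr1,pr2,pr2⟩ : X ⨯ A ⟶ (X ⨯ A) ⨯ A`. -/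
structure IsElementary where
  δ : ∀ A : C, Fib P (A ⨯ A)
  adj :
    ∀ (X A : C) (α : Fib P (X ⨯ A)) (β : Fib P ((X ⨯ A) ⨯ A)),
      (rmap P (prod.fst : (X ⨯ A) ⨯ A ⟶ X ⨯ A) α ⊓
          rmap P (prod.lift (prod.fst ≫ prod.snd) prod.snd : (X ⨯ A) ⨯ A ⟶ A ⨯ A) (δ A) ≤ β)
        ↔ α ≤ rmap P (prod.lift (𝟙 (X ⨯ A)) prod.snd : X ⨯ A ⟶ (X ⨯ A) ⨯ A) β

/-- A `P`-equivalence relation over `A`. -/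
structure IsEqRel (hE : IsElementary P) {A : C} (ρ : Fib P (A ⨯ A)) : Prop where
  refl : hE.δ A ≤ ρ
  symm : ρ = rmap P (prod.lift prod.snd prod.fst : A ⨯ A ⟶ A ⨯ A) ρ
  trans :
    rmap P (prod.fst : (A ⨯ A) ⨯ A ⟶ A ⨯ A) ρ ⊓
        rmap P (prod.lift (prod.fst ≫ prod.snd) prod.snd : (A ⨯ A) ⨯ A ⟶ A ⨯ A) ρ ≤
      rmap P (prod.lift (prod.fst ≫ prod.fst) prod.snd : (A ⨯ A) ⨯ A ⟶ A ⨯ A) ρ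

/-- An elementary existential doctrine, together with the induced left adjoints
`∃_f` along all arrows, satisfying the adjunction law, Frobenius reciprocity, and
the Beck–Chevalley condition along pullbacks of projections. -/
structure IsExistential extends IsElementary P where
  E : ∀ {A B : C}, (A ⟶ B) → Fib P A → Fib P B
  adjE : ∀ {A B : C} (f : A ⟶ B) (α : Fib P A) (β : Fib P B),
    E f α ≤ β ↔ α ≤ rmap P f β
  frobenius : ∀ {A B : C} (f : A ⟶ B) (α : Fib P A) (β : Fib P B),
    E f (α ⊓ rmap P f β) = E f α ⊓ β
  beckChevalley : ∀ {B A A' : C} (f : A' ⟶ A) (β : Fib P (B ⨯ A)),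
    E (prod.snd : B ⨯ A' ⟶ A') (rmap P (prod.map (𝟙 B) f) β) =
      rmap P f (E (prod.snd : B ⨯ A ⟶ A) β)

/-- Descent data for a relation `ρ` over `A`. -/
def Des {A : C} (ρ : Fib P (A ⨯ A)) : Set (Fib P A) :=
  {α | rmap P (prod.fst : A ⨯ A ⟶ A) α ⊓ ρ ≤ rmap P (prod.snd : A ⨯ A ⟶ A) α}

/-- Comprehensive diagonals: `f = g` iff `⊤ = P⟨f,g⟩(δ)`. -/
def ComprehensiveDiagonals (hE : IsElementary P) : Prop :=
  ∀ {X A : C} (f g : X ⟶ A), f = g ↔ rmap P (prod.lift f g) (hE.δ A) = ⊤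

/-- (Weak) comprehension structure. -/
structure Comprehension where
  cObj : ∀ {A : C}, Fib P A → C
  cArr : ∀ {A : C} (α : Fib P A), cObj α ⟶ A
  cTop : ∀ {A : C} (α : Fib P A), rmap P (cArr α) α = ⊤
  cUniv : ∀ {A : C} (α : Fib P A) {Y : C} (f : Y ⟶ A),
    rmap P f α = ⊤ → ∃ k : Y ⟶ cObj α, k ≫ cArr α = f

/-- Full comprehension. -/
def Comprehension.Full (hC : Comprehension P) : Prop :=
  ∀ {A : C} (α β : Fib P A), α ≤ β ↔ rmap P (hC.cArr α) β = ⊤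

/-- Strong comprehension: comprehension arrows are monic. -/
def Comprehension.Strong (hC : Comprehension P) : Prop :=
  ∀ {A : C} (α : Fib P A), Mono (hC.cArr α)

/-- `P`-injective arrow. -/
def PInj (hE : IsElementary P) {X A : C} (f : X ⟶ A) : Prop :=
  rmap P (prod.map f f) (hE.δ A) = hE.δ X

/-- `P`-surjective arrow. -/
def PSurj (hEx : IsExistential P) {X A : C} (f : X ⟶ A) : Prop :=
  hEx.E f (⊤ : Fib P X) = ⊤

/-- The product relation `ρ ⊠ σ` on `(A ⨯ B) ⨯ (A ⨯ B)`. -/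
def boxprod {A B : C} (ρ : Fib P (A ⨯ A)) (σ : Fib P (B ⨯ B)) :
    Fib P ((A ⨯ B) ⨯ (A ⨯ B)) :=
  rmap P (prod.map prod.fst prod.fst) ρ ⊓ rmap P (prod.map prod.snd prod.snd) σ

/-- If `P` is elementary with comprehensive diagonals and strong
comprehensions, then the base category has all finite limits; concretely, for
parallel arrows `f g : X ⟶ A` the comprehension arrow of `P⟨f,g⟩(δ A)` is an
equalizer of `f` and `g`. -/
theorem finite_limits_of_strong_comprehension
    (hE : IsElementary P) (hC : Comprehension P)
    (hcd : ComprehensiveDiagonals P hE) (hs : hC.Strong P) :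
    HasFiniteLimits C ∧
      ∀ {X A : C} (f g : X ⟶ A),
        (hC.cArr (rmap P (prod.lift f g) (hE.δ A)) ≫ f =
            hC.cArr (rmap P (prod.lift f g) (hE.δ A)) ≫ g) ∧
          ∀ {Z : C} (h : Z ⟶ X), h ≫ f = h ≫ g →
            ∃! k : Z ⟶ hC.cObj (rmap P (prod.lift f g) (hE.δ A)),
              k ≫ hC.cArr (rmap P (prod.lift f g) (hE.δ A)) = h := by
  have rcomp : ∀ {X Y Z : C} (u : X ⟶ Y) (v : Y ⟶ Z) (β : Fib P Z),
      rmap P (u ≫ v) β = rmap P u (rmap P v β) := by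
    intro X Y Z u v β
    simp only [rmap, op_comp, P.map_comp]
    rfl
  -- the equalizer property
  have key : ∀ {X A : C} (f g : X ⟶ A),
      (hC.cArr (rmap P (prod.lift f g) (hE.δ A)) ≫ f =
          hC.cArr (rmap P (prod.lift f g) (hE.δ A)) ≫ g) ∧
        ∀ {Z : C} (h : Z ⟶ X), h ≫ f = h ≫ g →
          ∃! k : Z ⟶ hC.cObj (rmap P (prod.lift f g) (hE.δ A)),
            k ≫ hC.cArr (rmap P (prod.lift f g) (hE.δ A)) = h := by
    intro X A f g
    set α := rmap P (prod.lift f g) (hE.δ A) with hα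
    set c := hC.cArr α with hc
    constructor
    · rw [hcd (c ≫ f) (c ≫ g)]
      have : prod.lift (c ≫ f) (c ≫ g) = c ≫ prod.lift f g := by simp
      rw [this, rcomp, ← hα, hC.cTop]
    · intro Z h hfg
      have h1 : rmap P h α = ⊤ := by
        rw [hα, ← rcomp]
        have : h ≫ prod.lift f g = prod.lift (h ≫ f) (h ≫ g) := by simp
        rw [this, ← hcd]
        exact hfg
      obtain ⟨k, hk⟩ := hC.cUniv α h h1
      refine ⟨k, hk, fun k' hk' => ?_⟩
      have := hs α
      exact (cancel_mono c).mp (by rw [hk, hk'])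
  refine ⟨?_, fun {X A} f g => key f g⟩
  have : HasEqualizers C := by
    constructor
    intro F
    have hfl : HasLimit (parallelPair (F.map WalkingParallelPairHom.left)
        (F.map WalkingParallelPairHom.right)) := by
      set f := F.map WalkingParallelPairHom.left
      set g := F.map WalkingParallelPairHom.right
      obtain ⟨hcomm, huniv⟩ := key f g
      refine HasLimit.mk ⟨Fork.ofι (hC.cArr (rmap P (prod.lift f g) (hE.δ _))) hcomm, ?_⟩
      apply Fork.IsLimit.mk'
      intro s
      have hku := huniv s.ι s.condition
      exact ⟨hku.exists.choose, hku.exists.choose_spec,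
        fun {m} hm => hku.unique hm hku.exists.choose_spec⟩
    exact hasLimit_of_iso (diagramIsoParallelPair F).symm
  exact hasFiniteLimits_of_hasEqualizers_and_finite_products

end DoctrinePaper
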